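/- arXiv:2211.04270 — 4 statements merged into one kernel-verified Lean document; each statement's English description precedes it below -/
import Mathlib

section
/- Let κ be a field, A a commutative κ-algebra, U, K, H ∈ A, S ∈ A invertible, and scalars α, β, δ_V, φ, ψ, τ, z, w ∈ κ with α, β invertible. Assume: (i) the skein relation S − S⁻¹ = z·(1 − U) + w·(H − K); (ii) the relations U² = δ_V·U, U·K = 0, U·H = φ·U, U·S = α³·U, U·S⁻¹ = α⁻³·U, K² = ψ·K, K·H = τ·K, K·S = β·K, K·S⁻¹ = β⁻¹·K; (iii) U ≠ 0 and K ≠ 0; and (iv) (τ − ψ)·δ_V + φ + ψ − τ ≠ 0. Then z = ((β − β⁻¹)·φ + (α³ − α⁻³)·(ψ − τ)) / ((τ − ψ)·δ_V + φ + ψ − τ) and w = ((β − β⁻¹)·(δ_V − 1) + (α³ − α⁻³)) / ((τ − ψ)·δ_V + φ + ψ − τ). -/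
/-- If `c • x = 0` in a `κ`-algebra with `x ≠ 0` and `κ` a field, then `c = 0`. -/
lemma smul_zero_of_ne {κ : Type*} [Field κ] {A : Type*} [CommRing A] [Algebra κ A]
    {c : κ} {x : A} (h : c • x = 0) (hx : x ≠ 0) : c = 0 := by
  by_contra hc
  apply hx
  have := congrArg (fun y => c⁻¹ • y) h
  simpa [smul_smul, inv_mul_cancel₀ hc] using this

/-- Solving the 2×2 linear system for `z` and `w`. -/
lemma solve_system {κ : Type*} [Field κ] {a b z w δV φ ψ τ : κ}
    (e1 : a = z * (1 - δV) + w * φ) (e2 : b = z + w * (τ - ψ))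
    (hden : (τ - ψ) * δV + φ + ψ - τ ≠ 0) :
    z = (b * φ + a * (ψ - τ)) / ((τ - ψ) * δV + φ + ψ - τ) ∧
      w = (b * (δV - 1) + a) / ((τ - ψ) * δV + φ + ψ - τ) := by
  constructor
  · field_simp
    linear_combination (τ - ψ) * e1 - φ * e2
  · rw [eq_div_iff hden]
    linear_combination (1 - δV) * e2 - e1

/-- the skein coefficients `z` and `w` of the two-point algebra `A(2)`
are determined by the parameters `α, β, δ_V, φ, ψ, τ`. -/
theorem skein_coefficients (κ : Type*) [Field κ] (A : Type*) [CommRing A] [Algebra κ A]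
    (U K H S Sinv : A) (hS : S * Sinv = 1)
    (α β δV φ ψ τ z w : κ) (hα : α ≠ 0) (hβ : β ≠ 0)
    (hskein : S - Sinv = z • ((1 : A) - U) + w • (H - K))
    (hUU : U * U = δV • U) (hUK : U * K = 0)
    (hUH : U * H = φ • U) (hUS : U * S = (α ^ 3) • U) (hUSinv : U * Sinv = (α⁻¹ ^ 3) • U)
    (hKK : K * K = ψ • K) (hKH : K * H = τ • K)
    (hKS : K * S = β • K) (hKSinv : K * Sinv = β⁻¹ • K)
    (hU : U ≠ 0) (hK : K ≠ 0)
    (hden : (τ - ψ) * δV + φ + ψ - τ ≠ 0) :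
    z = ((β - β⁻¹) * φ + (α ^ 3 - α⁻¹ ^ 3) * (ψ - τ)) / ((τ - ψ) * δV + φ + ψ - τ) ∧
      w = ((β - β⁻¹) * (δV - 1) + (α ^ 3 - α⁻¹ ^ 3)) / ((τ - ψ) * δV + φ + ψ - τ) := by
  have hUeq : ((α ^ 3 - α⁻¹ ^ 3) - (z * (1 - δV) + w * φ)) • U = 0 := by
    have h := congrArg (fun x => U * x) hskein
    simp only [mul_sub, mul_add, mul_one, mul_smul_comm] at h
    rw [hUS, hUSinv, hUU, hUH, hUK] at h
    rw [sub_smul, sub_eq_zero, sub_smul, h]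
    simp only [smul_sub, smul_smul, sub_zero]
    module
  have hKeq : ((β - β⁻¹) - (z + w * (τ - ψ))) • K = 0 := by
    have h := congrArg (fun x => K * x) hskein
    simp only [mul_sub, mul_add, mul_one, mul_smul_comm] at h
    rw [hKS, hKSinv, hKK, hKH, show K * U = 0 by rw [mul_comm]; exact hUK] at h
    rw [sub_smul, sub_eq_zero, sub_smul, h]
    simp only [smul_sub, smul_smul, sub_zero]
    module
  have e1 : (α ^ 3 - α⁻¹ ^ 3) = z * (1 - δV) + w * φ :=
    sub_eq_zero.mp (smul_zero_of_ne hUeq hU)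
  have e2 : (β - β⁻¹) = z + w * (τ - ψ) :=
    sub_eq_zero.mp (smul_zero_of_ne hKeq hK)
  exact solve_system e1 e2 hden
end

section
/- Let κ be a field, A a commutative κ-algebra, U, K, H ∈ A, S ∈ A invertible, and α, β, γ ∈ κ invertible. Define X_h := γ⁻¹·S·H and X_v := γ·S⁻¹·H. Assume the relations S⁻¹·U = α⁻³·U and S⁻¹·K = β⁻¹·K, assume {1, U, K, H, S} is κ-linearly independent in A, and assume there is a κ-linear map Rot : A → A with Rot(1) = U, Rot(U) = 1, Rot(K) = H, Rot(H) = K, Rot(S⁻¹) = S, and Rot(X_v) = X_h. Suppose X_h = a_I·1 + a_U·U + a_K·K + a_H·H + a_S·S for scalars a_I, a_U, a_K, a_H, a_S ∈ κ. Then: a_H·a_K = 1, a_H² = −β⁻¹·γ·a_K, a_H·a_I = −α⁻³·γ·a_U, a_H·a_U = −γ·a_S, and a_H·a_S = −γ·a_I. Consequently a_H³ = −β⁻¹·γ, and if moreover β = α³·γ⁻² and a_H = −α⁻¹·γ, then a_K = −α·γ⁻¹, a_U = α²·a_I, and a_S = α·a_I. -/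
/-- the HS relation in the two-point algebra `A(2)`: the coefficients of the
dotted crossing `X_h` in the basis `{1, U, K, H, S}` satisfy the displayed equations. -/
theorem HS_relation (κ : Type*) [Field κ] (A : Type*) [CommRing A] [Algebra κ A]
    (U K H S Sinv : A) (hS : S * Sinv = 1)
    (α β γ : κ) (hα : α ≠ 0) (hβ : β ≠ 0) (hγ : γ ≠ 0)
    (Xh Xv : A) (hXh : Xh = γ⁻¹ • (S * H)) (hXv : Xv = γ • (Sinv * H))
    (hSinvU : Sinv * U = (α⁻¹ ^ 3) • U) (hSinvK : Sinv * K = β⁻¹ • K)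
    (hli : LinearIndependent κ ![1, U, K, H, S])
    (Rot : A →ₗ[κ] A)
    (hR1 : Rot 1 = U) (hRU : Rot U = 1) (hRK : Rot K = H) (hRH : Rot H = K)
    (hRSinv : Rot Sinv = S) (hRXv : Rot Xv = Xh)
    (aI aU aK aH aS : κ)
    (hexp : Xh = aI • (1 : A) + aU • U + aK • K + aH • H + aS • S) :
    aH * aK = 1 ∧ aH ^ 2 = -β⁻¹ * γ * aK ∧ aH * aI = -(α⁻¹ ^ 3) * γ * aU ∧
      aH * aU = -γ * aS ∧ aH * aS = -γ * aI ∧ aH ^ 3 = -β⁻¹ * γ ∧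
      (β = α ^ 3 * γ⁻¹ ^ 2 → aH = -α⁻¹ * γ →
        aK = -α * γ⁻¹ ∧ aU = α ^ 2 * aI ∧ aS = α * aI) := by
  have hSinvS : Sinv * S = 1 := by rw [mul_comm]; exact hS
  have hSinvH : Sinv * H = γ⁻¹ • Xv := by
    rw [hXv, smul_smul, inv_mul_cancel₀ hγ, one_smul]
  -- Sinv * Xh = γ⁻¹ • H
  have h1 : Sinv * Xh = γ⁻¹ • H := by
    rw [hXh, mul_smul_comm, ← mul_assoc, hSinvS, one_mul]
  have h2 : Sinv * Xh = aI • Sinv + (α⁻¹ ^ 3 * aU) • U + (β⁻¹ * aK) • K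
      + (γ⁻¹ * aH) • Xv + aS • (1 : A) := by
    rw [hexp]
    rw [mul_add, mul_add, mul_add, mul_add]
    rw [mul_smul_comm, mul_smul_comm, mul_smul_comm, mul_smul_comm, mul_smul_comm]
    rw [hSinvU, hSinvK, hSinvH, hSinvS, mul_one]
    rw [smul_smul, smul_smul, smul_smul]
    ring_nf
  -- H in terms of basis and Xv
  have hH : H = (γ * aI) • Sinv + (γ * (α⁻¹ ^ 3 * aU)) • U + (γ * (β⁻¹ * aK)) • K
      + aH • Xv + (γ * aS) • (1 : A) := by
    have : γ • (Sinv * Xh) = H := by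
      rw [h1, smul_smul, mul_inv_cancel₀ hγ, one_smul]
    rw [← this, h2]
    rw [smul_add, smul_add, smul_add, smul_add, smul_smul, smul_smul, smul_smul, smul_smul]
    rw [smul_smul, mul_inv_cancel_left₀ hγ]
  -- apply Rot
  have hK : K = (γ * aI) • S + (γ * (α⁻¹ ^ 3 * aU)) • (1 : A) + (γ * (β⁻¹ * aK)) • H
      + aH • Xh + (γ * aS) • U := by
    have := congrArg Rot hH
    simpa [map_add, map_smul, hRSinv, hRU, hRK, hRXv, hR1, hRH] using this
  -- the vanishing linear combination
  have key : ∀ i, (![γ * (α⁻¹ ^ 3 * aU) + aH * aI, γ * aS + aH * aU, aH * aK - 1,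
      γ * (β⁻¹ * aK) + aH * aH, γ * aI + aH * aS] : Fin 5 → κ) i = 0 := by
    apply Fintype.linearIndependent_iff.1 hli
    rw [Fin.sum_univ_five]
    simp only [Matrix.cons_val_zero, Matrix.cons_val_one, Matrix.head_cons,
      Matrix.cons_val_two, Matrix.tail_cons, Matrix.cons_val_three, Matrix.cons_val_four]
    have hK' := hK
    rw [hexp] at hK'
    simp only [Algebra.smul_def, map_add, map_mul, map_sub, map_one] at hK' ⊢
    linear_combination (-1 : A) * hK'
  have e0 := key 0
  have e1 := key 1
  have e2 := key 2
  have e3 := key 3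
  have e4 := key 4
  simp only [Matrix.cons_val_zero, Matrix.cons_val_one, Matrix.head_cons,
    Matrix.cons_val_two, Matrix.tail_cons, Matrix.cons_val_three, Matrix.cons_val_four] at e0 e1 e2 e3 e4
  have r1 : aH * aK = 1 := by linear_combination e2
  have r2 : aH ^ 2 = -β⁻¹ * γ * aK := by linear_combination e3
  have r3 : aH * aI = -(α⁻¹ ^ 3) * γ * aU := by linear_combination e0
  have r4 : aH * aU = -γ * aS := by linear_combination e1
  have r5 : aH * aS = -γ * aI := by linear_combination e4
  have r6 : aH ^ 3 = -β⁻¹ * γ := by linear_combination aH * r2 - β⁻¹ * γ * r1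
  refine ⟨r1, r2, r3, r4, r5, r6, fun hβ' haH => ?_⟩
  subst haH
  have hK' : aK = -α * γ⁻¹ := by
    field_simp at r1 ⊢
    linear_combination (-1 : κ) * r1
  have hU' : aU = α ^ 2 * aI := by
    field_simp at r3
    apply mul_left_cancel₀ (mul_ne_zero hγ hα)
    linear_combination (γ * α) * r3
  have hS' : aS = α * aI := by
    have h5 : (-α⁻¹ * γ) * (α ^ 2 * aI) = -γ * aS := by rw [← hU']; exact r4
    field_simp at h5
    apply mul_left_cancel₀ (mul_ne_zero hγ hα)
    linear_combination (γ * α) * h5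
  exact ⟨hK', hU', hS'⟩
end

section
/- Let κ be a field, A a commutative κ-algebra, U, K, H ∈ A, S ∈ A invertible, and α, β, γ, δ_V, φ, ψ, τ, z, w ∈ κ with α, β, γ invertible. Define X_h := γ⁻¹·S·H and X_v := γ·S⁻¹·H. Assume the relations U² = δ_V·U, U·K = 0, U·H = φ·U, U·S = α³·U, U·S⁻¹ = α⁻³·U, K² = ψ·K, K·H = τ·K, K·S = β·K, K·S⁻¹ = β⁻¹·K; assume U ≠ 0 and K ≠ 0; and assume the identity X_h − X_v = (α⁻¹ − α + z)·(1 − U) + (α⁻¹·γ − α·γ⁻¹ + w)·(H − K). Then the scalar equations (α³·γ⁻¹ − α⁻³·γ)·φ = (α⁻¹ − α + z)·(1 − δ_V) + (α⁻¹·γ − α·γ⁻¹ + w)·φ and (β·γ⁻¹ − β⁻¹·γ)·τ = (α⁻¹ − α + z) + (α⁻¹·γ − α·γ⁻¹ + w)·(τ − ψ) hold in κ. -/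
/-- multiplying the variant skein relation by `U` and by `K` gives two
scalar equations among the parameters. -/
theorem skein_variant_scalar_equations (κ : Type*) [Field κ] (A : Type*) [CommRing A]
    [Algebra κ A]
    (U K H S Sinv : A) (hS : S * Sinv = 1)
    (α β γ δV φ ψ τ z w : κ) (hα : α ≠ 0) (hβ : β ≠ 0) (hγ : γ ≠ 0)
    (Xh Xv : A) (hXh : Xh = γ⁻¹ • (S * H)) (hXv : Xv = γ • (Sinv * H))
    (hUU : U * U = δV • U) (hUK : U * K = 0)
    (hUH : U * H = φ • U) (hUS : U * S = (α ^ 3) • U) (hUSinv : U * Sinv = (α⁻¹ ^ 3) • U)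
    (hKK : K * K = ψ • K) (hKH : K * H = τ • K)
    (hKS : K * S = β • K) (hKSinv : K * Sinv = β⁻¹ • K)
    (hU : U ≠ 0) (hK : K ≠ 0)
    (hvar : Xh - Xv = (α⁻¹ - α + z) • ((1 : A) - U) + (α⁻¹ * γ - α * γ⁻¹ + w) • (H - K)) :
    (α ^ 3 * γ⁻¹ - α⁻¹ ^ 3 * γ) * φ
        = (α⁻¹ - α + z) * (1 - δV) + (α⁻¹ * γ - α * γ⁻¹ + w) * φ ∧
      (β * γ⁻¹ - β⁻¹ * γ) * τ
        = (α⁻¹ - α + z) + (α⁻¹ * γ - α * γ⁻¹ + w) * (τ - ψ) := by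
  have hsm : ∀ (x : A) (c d : κ), x ≠ 0 → c • x = d • x → c = d := by
    intro x c d hx h
    have h0 : (c - d) • x = 0 := by rw [sub_smul, h, sub_self]
    rcases smul_eq_zero.mp h0 with h' | h'
    · exact sub_eq_zero.mp h'
    · exact absurd h' hx
  have hUXh : U * Xh = (γ⁻¹ * (α ^ 3 * φ)) • U := by
    rw [hXh, mul_smul_comm, ← mul_assoc, hUS, smul_mul_assoc, hUH, smul_smul, smul_smul, mul_assoc]
  have hUXv : U * Xv = (γ * (α⁻¹ ^ 3 * φ)) • U := by
    rw [hXv, mul_smul_comm, ← mul_assoc, hUSinv, smul_mul_assoc, hUH, smul_smul, smul_smul, mul_assoc]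
  have hKXh : K * Xh = (γ⁻¹ * (β * τ)) • K := by
    rw [hXh, mul_smul_comm, ← mul_assoc, hKS, smul_mul_assoc, hKH, smul_smul, smul_smul, mul_assoc]
  have hKXv : K * Xv = (γ * (β⁻¹ * τ)) • K := by
    rw [hXv, mul_smul_comm, ← mul_assoc, hKSinv, smul_mul_assoc, hKH, smul_smul, smul_smul, mul_assoc]
  have hKU : K * U = 0 := by rw [mul_comm]; exact hUK
  have eU := congrArg (fun x => U * x) hvar
  simp only [mul_sub, mul_add, mul_one, mul_smul_comm, hUXh, hUXv, hUU, hUK, hUH] at eU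
  have eK := congrArg (fun x => K * x) hvar
  simp only [mul_sub, mul_add, mul_one, mul_smul_comm, hKXh, hKXv, hKK, hKH] at eK
  rw [hKU] at eK
  constructor
  · refine hsm U _ _ hU ?_
    linear_combination (norm := module) eU
  · refine hsm K _ _ hK ?_
    linear_combination (norm := module) eK
end

section
/- Let F = ℚ(t, u, v) be the field of rational functions in three variables t, u, v over ℚ, and for integers a, b, c set [a,b,c] := t^a·u^b·v^c − t^{-a}·u^{-b}·v^{-c} ∈ F. Define δ_V := −([2,2,2]·[1,2,1]·[4,2,4]·[2,3,3]·[3,3,2]) / ([1,1,1]·[2,4,2]·[2,1,2]·[1,0,0]·[0,0,1]), δ_W := ([3,3,0]·[2,2,1]·[1,2,0]·[2,2,2]·[3,3,3]·[2,3,2]·[2,3,3]·[1,2,1]·[4,2,4]·[4,2,2]) / ([0,0,2]·[0,0,1]·[1,0,-1]·[1,0,0]·[1,1,0]·[2,4,0]·[1,1,1]·[2,4,2]·[2,1,2]·[2,1,1]), ψ := ([1,0,-1]·[0,0,2]·[1,1,0]·[3,3,2]·[2,4,0]·[1,2,1]) / ([1,0,0]·[0,0,1]·[3,3,0]·[2,2,1]·[1,2,0]·[2,4,2]),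 and φ := −([3,3,3]·[2,3,2]·[1,2,1]·[4,2,2]) / ([0,0,1]·[1,0,0]·[2,4,2]·[2,1,1]). Then φ·δ_V = ψ·δ_W in F. -/
noncomputable section

/-- The field `ℚ(t, u, v)` of rational functions in three variables over `ℚ`. -/
abbrev F3 : Type := FractionRing (MvPolynomial (Fin 3) ℚ)

/-- The variable `t`. -/
def tF : F3 := algebraMap (MvPolynomial (Fin 3) ℚ) F3 (MvPolynomial.X 0)
/-- The variable `u`. -/
def uF : F3 := algebraMap (MvPolynomial (Fin 3) ℚ) F3 (MvPolynomial.X 1)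
/-- The variable `v`. -/
def vF : F3 := algebraMap (MvPolynomial (Fin 3) ℚ) F3 (MvPolynomial.X 2)

/-- The three-variable quantum bracket `[a,b,c] = tᵃuᵇvᶜ − t⁻ᵃu⁻ᵇv⁻ᶜ`. -/
def br (a b c : ℤ) : F3 :=
  tF ^ a * uF ^ b * vF ^ c - tF ^ (-a) * uF ^ (-b) * vF ^ (-c)

/-- The quantum dimension `δ_V`. -/
def deltaV : F3 :=
  -(br 2 2 2 * br 1 2 1 * br 4 2 4 * br 2 3 3 * br 3 3 2) /
    (br 1 1 1 * br 2 4 2 * br 2 1 2 * br 1 0 0 * br 0 0 1)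

/-- The quantum dimension `δ_W`. -/
def deltaW : F3 :=
  (br 3 3 0 * br 2 2 1 * br 1 2 0 * br 2 2 2 * br 3 3 3 * br 2 3 2 *
      br 2 3 3 * br 1 2 1 * br 4 2 4 * br 4 2 2) /
    (br 0 0 2 * br 0 0 1 * br 1 0 (-1) * br 1 0 0 * br 1 1 0 * br 2 4 0 *
      br 1 1 1 * br 2 4 2 * br 2 1 2 * br 2 1 1)

/-- The bigon coefficient `ψ`. -/
def psiF : F3 :=
  (br 1 0 (-1) * br 0 0 2 * br 1 1 0 * br 3 3 2 * br 2 4 0 * br 1 2 1) /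
    (br 1 0 0 * br 0 0 1 * br 3 3 0 * br 2 2 1 * br 1 2 0 * br 2 4 2)

/-- The bigon coefficient `φ`. -/
def phiF : F3 :=
  -(br 3 3 3 * br 2 3 2 * br 1 2 1 * br 4 2 2) /
    (br 0 0 1 * br 1 0 0 * br 2 4 2 * br 2 1 1)

lemma injF : Function.Injective (algebraMap (MvPolynomial (Fin 3) ℚ) F3) :=
  IsFractionRing.injective _ _

lemma tF_ne : tF ≠ 0 := by
  rw [tF, Ne, ← (algebraMap (MvPolynomial (Fin 3) ℚ) F3).map_zero]
  exact fun h => MvPolynomial.X_ne_zero 0 (injF h)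
lemma uF_ne : uF ≠ 0 := by
  rw [uF, Ne, ← (algebraMap (MvPolynomial (Fin 3) ℚ) F3).map_zero]
  exact fun h => MvPolynomial.X_ne_zero 1 (injF h)
lemma vF_ne : vF ≠ 0 := by
  rw [vF, Ne, ← (algebraMap (MvPolynomial (Fin 3) ℚ) F3).map_zero]
  exact fun h => MvPolynomial.X_ne_zero 2 (injF h)

lemma mon_ne_one (a b c : ℕ) (habc : a + b + c ≠ 0) : tF ^ a * uF ^ b * vF ^ c ≠ 1 := by
  rw [tF, uF, vF, ← map_pow, ← map_pow, ← map_pow, ← map_mul, ← map_mul]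
  intro he
  have hp : (MvPolynomial.X 0 ^ a * MvPolynomial.X 1 ^ b * MvPolynomial.X 2 ^ c :
      MvPolynomial (Fin 3) ℚ) = 1 := injF (he.trans (map_one _).symm)
  have h2 := congrArg (MvPolynomial.eval fun _ : Fin 3 => (2 : ℚ)) hp
  simp only [MvPolynomial.eval_mul, MvPolynomial.eval_pow, MvPolynomial.eval_X,
    map_one, ← pow_add] at h2
  have h3 : (1 : ℚ) < 2 ^ (a + b + c) := one_lt_pow₀ one_lt_two habc
  rw [h2] at h3
  exact lt_irrefl _ h3

lemma br330 : br 3 3 0 ≠ 0 := by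
  intro h
  rw [br, sub_eq_zero] at h
  have ht := tF_ne; have hu := uF_ne; have hv := vF_ne
  field_simp at h
  norm_num at h
  exact mon_ne_one 6 6 0 (by norm_num) (by rw [← h]; ring)

lemma br002 : br 0 0 2 ≠ 0 := by
  intro h
  rw [br, sub_eq_zero] at h
  have ht := tF_ne; have hu := uF_ne; have hv := vF_ne
  field_simp at h
  norm_num at h
  exact mon_ne_one 0 0 4 (by norm_num) (by rw [← h]; ring)

lemma br110 : br 1 1 0 ≠ 0 := by
  intro h
  rw [br, sub_eq_zero] at h
  have ht := tF_ne; have hu := uF_ne; have hv := vF_ne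
  field_simp at h
  norm_num at h
  exact mon_ne_one 2 2 0 (by norm_num) (by rw [← h]; ring)

lemma br240 : br 2 4 0 ≠ 0 := by
  intro h
  rw [br, sub_eq_zero] at h
  have ht := tF_ne; have hu := uF_ne; have hv := vF_ne
  field_simp at h
  norm_num at h
  exact mon_ne_one 4 8 0 (by norm_num) (by rw [← h]; ring)

lemma br221 : br 2 2 1 ≠ 0 := by
  intro h
  rw [br, sub_eq_zero] at h
  have ht := tF_ne; have hu := uF_ne; have hv := vF_ne
  field_simp at h
  exact mon_ne_one 4 4 2 (by norm_num) h

lemma br120 : br 1 2 0 ≠ 0 := by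
  intro h
  rw [br, sub_eq_zero] at h
  have ht := tF_ne; have hu := uF_ne; have hv := vF_ne
  field_simp at h
  norm_num at h
  exact mon_ne_one 2 4 0 (by norm_num) (by rw [← h]; ring)

lemma br10m1 : br 1 0 (-1) ≠ 0 := by
  intro h
  rw [br, sub_eq_zero] at h
  have ht := tF_ne; have hu := uF_ne; have hv := vF_ne
  field_simp at h
  simp only [neg_zero, zpow_zero, mul_one, neg_neg, zpow_one] at h
  rw [tF, vF, ← map_pow, ← map_mul] at h
  have hp := injF h
  have h2 := congrArg (MvPolynomial.eval fun i : Fin 3 => ((i : ℕ) : ℚ)) hp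
  simp [MvPolynomial.eval_X] at h2

/-- the compatibility `φ·δ_V = ψ·δ_W` in `ℚ(t,u,v)`. -/
theorem phi_deltaV_eq_psi_deltaW : phiF * deltaV = psiF * deltaW := by
  have hE : br 1 0 (-1) * br 0 0 2 * br 1 1 0 * br 2 4 0 * br 3 3 0 * br 2 2 1 * br 1 2 0 ≠ 0 :=
    mul_ne_zero (mul_ne_zero (mul_ne_zero (mul_ne_zero (mul_ne_zero
      (mul_ne_zero br10m1 br002) br110) br240) br330) br221) br120
  rw [phiF, deltaV, psiF, deltaW, div_mul_div_comm, div_mul_div_comm, neg_mul_neg]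
  rw [show br 1 0 (-1) * br 0 0 2 * br 1 1 0 * br 3 3 2 * br 2 4 0 * br 1 2 1 *
        (br 3 3 0 * br 2 2 1 * br 1 2 0 * br 2 2 2 * br 3 3 3 * br 2 3 2 *
          br 2 3 3 * br 1 2 1 * br 4 2 4 * br 4 2 2) =
      br 3 3 3 * br 2 3 2 * br 1 2 1 * br 4 2 2 *
        (br 2 2 2 * br 1 2 1 * br 4 2 4 * br 2 3 3 * br 3 3 2) *
        (br 1 0 (-1) * br 0 0 2 * br 1 1 0 * br 2 4 0 * br 3 3 0 * br 2 2 1 * br 1 2 0)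
      from by ring,
    show br 1 0 0 * br 0 0 1 * br 3 3 0 * br 2 2 1 * br 1 2 0 * br 2 4 2 *
        (br 0 0 2 * br 0 0 1 * br 1 0 (-1) * br 1 0 0 * br 1 1 0 * br 2 4 0 *
          br 1 1 1 * br 2 4 2 * br 2 1 2 * br 2 1 1) =
      br 0 0 1 * br 1 0 0 * br 2 4 2 * br 2 1 1 *
        (br 1 1 1 * br 2 4 2 * br 2 1 2 * br 1 0 0 * br 0 0 1) *
        (br 1 0 (-1) * br 0 0 2 * br 1 1 0 * br 2 4 0 * br 3 3 0 * br 2 2 1 * br 1 2 0)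
      from by ring,
    mul_div_mul_right _ _ hE]

end
end
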